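/- arXiv:1107.0300 — 2 statements merged into one kernel-verified Lean document; each statement's English description precedes it below -/
import Mathlib

section
/- Let α ≠ 0 be a real number, σ > 0, and define f(t) = ∑_{k ∈ ℤ} exp(−(t + kα)²/(2σ²)) for t ∈ ℝ. Then f attains its maximum exactly on the lattice αℤ: f(t) ≤ f(0) for all t ∈ ℝ, and f(t) = f(s) whenever t − s ∈ αℤ; consequently, for y, β ∈ ℝ with β ≠ 0, the function λ ↦ ∑_{k ∈ ℤ} exp(−(y − βλ + kα)²/(2σ²)) on ℝ attains its maximum at every λ ∈ (α/β)ℤ + y/β. -/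
open Complex Real


lemma pgml_summable {c : ℝ} (hc : 0 < c) :
    Summable fun n : ℤ => Real.exp (-c * (n : ℝ) ^ 2) := by
  have hnat : Summable fun n : ℕ => Real.exp (-c * (n : ℝ) ^ 2) := by
    refine Summable.of_nonneg_of_le (fun n => (Real.exp_pos _).le) (fun n => ?_)
      (summable_geometric_of_lt_one (Real.exp_pos (-c)).le
        (Real.exp_lt_one_iff.mpr (by linarith)))
    rw [← Real.exp_nat_mul]
    apply Real.exp_le_exp.mpr
    have : (n : ℝ) ≤ (n : ℝ) ^ 2 := by
      rcases Nat.eq_zero_or_pos n with h | h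
      · simp [h]
      · have h1 : (1:ℝ) ≤ n := by exact_mod_cast h
        nlinarith
    nlinarith
  refine Summable.of_nat_of_neg (by exact_mod_cast hnat) ?_
  convert hnat using 2 with n
  push_cast
  rfl
  push_cast
  ring_nf

lemma pgml_key (α σ t : ℝ) (hα : α ≠ 0) (hσ : 0 < σ) :
    ((∑' k : ℤ, Real.exp (-(t + k * α) ^ 2 / (2 * σ ^ 2)) : ℝ) : ℂ) =
      (1 / ((α ^ 2 / (2 * Real.pi * σ ^ 2) : ℝ) : ℂ) ^ (1 / 2 : ℂ)) *
        ∑' n : ℤ, Complex.exp (((-Real.pi / (α ^ 2 / (2 * Real.pi * σ ^ 2)) * n ^ 2 : ℝ) : ℂ)) *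
          Complex.exp (((2 * Real.pi * t * n / α : ℝ) : ℂ) * I) := by
  have hπ := Real.pi_pos
  have hα2 : (0:ℝ) < α ^ 2 := by positivity
  set a : ℝ := α ^ 2 / (2 * Real.pi * σ ^ 2) with ha_def
  have ha : 0 < a := by positivity
  set b : ℝ := -(t * α) / (2 * Real.pi * σ ^ 2) with hb_def
  have key := Complex.tsum_exp_neg_quadratic (a := (a : ℂ)) (by simpa using ha) ((b : ℝ) : ℂ)
  rw [Complex.ofReal_tsum]
  have h1 : ∀ k : ℤ, ((Real.exp (-(t + k * α) ^ 2 / (2 * σ ^ 2)) : ℝ) : ℂ) =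
      Complex.exp (-(Real.pi : ℂ) * a * (k : ℂ) ^ 2 + 2 * (Real.pi : ℂ) * (b : ℂ) * (k : ℂ)) *
        Complex.exp (((-(t ^ 2) / (2 * σ ^ 2) : ℝ) : ℂ)) := by
    intro k
    rw [Complex.ofReal_exp, ← Complex.exp_add]
    congr 1
    have hreal : (-(t + (k:ℝ) * α) ^ 2 / (2 * σ ^ 2)) =
        -Real.pi * a * (k:ℝ) ^ 2 + 2 * Real.pi * b * (k:ℝ) + (-(t ^ 2) / (2 * σ ^ 2)) := by
      rw [ha_def, hb_def]
      field_simp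
      ring
    exact_mod_cast congrArg (fun x : ℝ => (x : ℂ)) hreal
  simp_rw [h1]
  rw [tsum_mul_right, key, mul_assoc, ← tsum_mul_right]
  congr 1
  refine tsum_congr fun n => ?_
  rw [← Complex.exp_add, ← Complex.exp_add]
  congr 1
  have hr1 : Real.pi * b ^ 2 / a = t ^ 2 / (2 * σ ^ 2) := by
    rw [ha_def, hb_def]; field_simp
  have hr2 : 2 * Real.pi * b / a = -(2 * Real.pi * t / α) := by
    rw [ha_def, hb_def]; field_simp
  have hc1 : (Real.pi : ℂ) * (b : ℂ) ^ 2 / (a : ℂ) = (t : ℂ) ^ 2 / (2 * (σ : ℂ) ^ 2) := by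
    exact_mod_cast congrArg (fun x : ℝ => (x : ℂ)) hr1
  have hc2 : 2 * (Real.pi : ℂ) * (b : ℂ) / (a : ℂ) = -(2 * (Real.pi : ℂ) * (t : ℂ) / (α : ℂ)) := by
    exact_mod_cast congrArg (fun x : ℝ => (x : ℂ)) hr2
  push_cast
  linear_combination (-(Real.pi : ℂ) * (b:ℂ)^2 / (a:ℂ)) * Complex.I_sq + hc1 + (-(n:ℂ) * I) * hc2

/-- for `α ≠ 0`, `σ > 0` and `f(t) = ∑_{k∈ℤ} exp(−(t + kα)²/(2σ²))`,
`f` attains its maximum on the lattice `αℤ`: `f(t) ≤ f(0)` for all `t`, and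
`f(t) = f(s)` whenever `t − s ∈ αℤ`; consequently, for `β ≠ 0`, the likelihood
`λ ↦ ∑_{k∈ℤ} exp(−(y − βλ + kα)²/(2σ²))` attains its maximum at every
`λ ∈ (α/β)ℤ + y/β`. -/
theorem periodized_gaussian_max_on_lattice (α σ : ℝ) (hα : α ≠ 0) (hσ : 0 < σ) :
    let f : ℝ → ℝ := fun t => ∑' k : ℤ, Real.exp (-(t + k * α) ^ 2 / (2 * σ ^ 2))
    (∀ t : ℝ, f t ≤ f 0) ∧
    (∀ t s : ℝ, (∃ k : ℤ, t - s = k * α) → f t = f s) ∧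
    (∀ y β : ℝ, β ≠ 0 → ∀ lam : ℝ, (∃ m : ℤ, lam = m * (α / β) + y / β) →
      ∀ lam' : ℝ,
        (∑' k : ℤ, Real.exp (-(y - β * lam' + k * α) ^ 2 / (2 * σ ^ 2))) ≤
          ∑' k : ℤ, Real.exp (-(y - β * lam + k * α) ^ 2 / (2 * σ ^ 2))) := by
  intro f
  have hπ := Real.pi_pos
  have hα2 : (0:ℝ) < α ^ 2 := by positivity
  set a : ℝ := α ^ 2 / (2 * Real.pi * σ ^ 2) with ha_def
  have ha : 0 < a := by positivity
  have hπa : (0:ℝ) < Real.pi / a := by positivity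
  have hsum : Summable fun n : ℤ => Real.exp (-Real.pi / a * (n : ℝ) ^ 2) := by
    simpa [neg_div] using pgml_summable hπa
  have hA : (((a : ℝ)) : ℂ) ^ (1 / 2 : ℂ) = ((a ^ ((1:ℝ)/2) : ℝ) : ℂ) := by
    rw [Complex.ofReal_cpow ha.le]
    norm_num
  have hapos : (0:ℝ) < a ^ ((1:ℝ)/2) := Real.rpow_pos_of_pos ha _
  set S : ℝ := ∑' n : ℤ, Real.exp (-Real.pi / a * (n : ℝ) ^ 2) with hS
  have hnorm : ∀ t : ℝ, ∀ n : ℤ,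
      ‖Complex.exp (((-Real.pi / a * (n:ℝ) ^ 2 : ℝ) : ℂ)) *
        Complex.exp (((2 * Real.pi * t * (n:ℝ) / α : ℝ) : ℂ) * I)‖ =
        Real.exp (-Real.pi / a * (n:ℝ) ^ 2) := by
    intro t n
    rw [norm_mul, Complex.norm_exp, Complex.norm_exp]
    simp only [Complex.ofReal_re, Complex.re_ofReal_mul, Complex.I_re, mul_zero,
      Real.exp_zero, mul_one]
  have hf0 : f 0 = (1 / a ^ ((1:ℝ)/2)) * S := by
    have hk0 := pgml_key α σ 0 hα hσ
    rw [← ha_def] at hk0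
    have h2 : ((f 0 : ℝ) : ℂ) = (((1 / a ^ ((1:ℝ)/2)) * S : ℝ) : ℂ) := by
      rw [show ((f 0 : ℝ) : ℂ) = ((∑' k : ℤ,
          Real.exp (-((0:ℝ) + k * α) ^ 2 / (2 * σ ^ 2)) : ℝ) : ℂ) from rfl, hk0, hA]
      push_cast [hS, Complex.ofReal_tsum]
      congr 1
      refine tsum_congr fun n => ?_
      simp
    exact_mod_cast h2
  have hmax : ∀ t : ℝ, f t ≤ f 0 := by
    intro t
    have hk := pgml_key α σ t hα hσ
    rw [← ha_def] at hk
    have hnonneg : 0 ≤ f t := tsum_nonneg fun k => (Real.exp_pos _).le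
    have hsum' : Summable fun n : ℤ =>
        ‖Complex.exp (((-Real.pi / a * (n:ℝ) ^ 2 : ℝ) : ℂ)) *
          Complex.exp (((2 * Real.pi * t * (n:ℝ) / α : ℝ) : ℂ) * I)‖ := by
      simpa only [hnorm t] using hsum
    calc f t = ‖((f t : ℝ) : ℂ)‖ := by
          rw [Complex.norm_real]
          exact (_root_.abs_of_nonneg hnonneg).symm
      _ = ‖(1 / ((a : ℝ) : ℂ) ^ (1 / 2 : ℂ)) * ∑' n : ℤ,
            Complex.exp (((-Real.pi / a * (n:ℝ) ^ 2 : ℝ) : ℂ)) *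
              Complex.exp (((2 * Real.pi * t * (n:ℝ) / α : ℝ) : ℂ) * I)‖ := by
          rw [show ((f t : ℝ) : ℂ) = ((∑' k : ℤ,
            Real.exp (-(t + k * α) ^ 2 / (2 * σ ^ 2)) : ℝ) : ℂ) from rfl, hk]
      _ ≤ ‖(1 / ((a : ℝ) : ℂ) ^ (1 / 2 : ℂ))‖ * ∑' n : ℤ,
            ‖Complex.exp (((-Real.pi / a * (n:ℝ) ^ 2 : ℝ) : ℂ)) *
              Complex.exp (((2 * Real.pi * t * (n:ℝ) / α : ℝ) : ℂ) * I)‖ := by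
          rw [norm_mul]
          exact mul_le_mul_of_nonneg_left (norm_tsum_le_tsum_norm hsum') (norm_nonneg _)
      _ = (1 / a ^ ((1:ℝ)/2)) * S := by
          congr 1
          · rw [hA, norm_div, Complex.norm_real]
            simp [Real.norm_eq_abs, _root_.abs_of_nonneg hapos.le]
            positivity
          · rw [hS]
            exact tsum_congr (hnorm t)
      _ = f 0 := hf0.symm
  have hper : ∀ t s : ℝ, (∃ k : ℤ, t - s = k * α) → f t = f s := by
    rintro t s ⟨k, hk⟩
    have hts : t = s + k * α := by linarith
    have h1 : ∀ m : ℤ, Real.exp (-(t + m * α) ^ 2 / (2 * σ ^ 2)) =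
        Real.exp (-(s + ((m + k : ℤ) : ℝ) * α) ^ 2 / (2 * σ ^ 2)) := by
      intro m
      rw [hts]
      push_cast
      ring_nf
    calc f t = ∑' m : ℤ, Real.exp (-(s + ((m + k : ℤ) : ℝ) * α) ^ 2 / (2 * σ ^ 2)) :=
          tsum_congr h1
      _ = f s := (Equiv.addRight k).tsum_eq
          (fun j : ℤ => Real.exp (-(s + (j : ℝ) * α) ^ 2 / (2 * σ ^ 2)))
  refine ⟨hmax, hper, ?_⟩
  rintro y β hβ lam ⟨m, hm⟩ lam'
  have h0 : f (y - β * lam) = f 0 := by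
    refine hper _ 0 ⟨-m, ?_⟩
    rw [hm]
    push_cast
    field_simp
    ring
  show f (y - β * lam') ≤ f (y - β * lam)
  rw [h0]
  exact hmax _
end

section
/- Let α ≠ 0 be a real number, σ > 0, and define f(t) = ∑_{k ∈ ℤ} exp(−(t + kα)²/(2σ²)) for t ∈ ℝ. Then f is even and |α|-periodic, and f is monotone nonincreasing in the distance to the lattice αℤ: for all real s, t with 0 ≤ s ≤ t ≤ |α|/2, one has f(s) ≥ f(t). -/
open Real Set Filter

namespace PG


lemma summable_nat {a c : ℝ} (ha : 0 < a) (hc : 0 < c) (u : ℝ) :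
    Summable (fun n : ℕ => rexp (-(u + n * a) ^ 2 / c)) := by
  apply summable_of_ratio_norm_eventually_le (r := rexp (-(a ^ 2) / c))
  · rw [exp_lt_one_iff]
    have : 0 < a ^ 2 / c := by positivity
    linarith [neg_div c (a^2)]
  · filter_upwards [Filter.eventually_ge_atTop ⌈(-u) / a⌉₊] with n hn
    have h1 : (-u) / a ≤ (n : ℝ) := le_trans (Nat.le_ceil _) (by exact_mod_cast hn)
    have h2 : 0 ≤ u + n * a := by
      rw [div_le_iff₀ ha] at h1
      nlinarith
    rw [Real.norm_eq_abs, Real.norm_eq_abs, abs_of_pos (exp_pos _), abs_of_pos (exp_pos _),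
      ← Real.exp_add, exp_le_exp]
    rw [← add_div]
    gcongr
    push_cast; nlinarith

lemma summable_int {a c : ℝ} (ha : 0 < a) (hc : 0 < c) (u : ℝ) :
    Summable (fun n : ℤ => rexp (-(u + n * a) ^ 2 / c)) := by
  apply Summable.of_nat_of_neg_add_one
  · have := summable_nat ha hc u
    apply this.congr
    intro n; push_cast; ring_nf
  · have := summable_nat ha hc (a - u)
    apply this.congr
    intro n; push_cast; ring_nf

lemma F_even {a c : ℝ} (u : ℝ) :
    ∑' n : ℤ, rexp (-(-u + n * a) ^ 2 / c) = ∑' n : ℤ, rexp (-(u + n * a) ^ 2 / c) := by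
  rw [← (Equiv.neg ℤ).tsum_eq (fun n : ℤ => rexp (-(-u + n * a) ^ 2 / c))]
  congr 1; funext n
  simp only [Equiv.neg_apply]
  congr 1; push_cast; ring

lemma F_per {a c : ℝ} (u : ℝ) :
    ∑' n : ℤ, rexp (-(u + a + n * a) ^ 2 / c) = ∑' n : ℤ, rexp (-(u + n * a) ^ 2 / c) := by
  rw [← (Equiv.addRight (1 : ℤ)).tsum_eq (fun n : ℤ => rexp (-(u + n * a) ^ 2 / c))]
  congr 1; funext n
  simp only [Equiv.coe_addRight]
  congr 1; push_cast; ring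

lemma hasDerivAt_gauss (c b u : ℝ) :
    HasDerivAt (fun u : ℝ => rexp (-(u + b) ^ 2 / c))
      (-(2 * (u + b)) / c * rexp (-(u + b) ^ 2 / c)) u := by
  have h : HasDerivAt (fun u : ℝ => -(u + b) ^ 2 / c) (-(2 * (u + b)) / c) u := by
    have h1 : HasDerivAt (fun u : ℝ => u + b) 1 u := (hasDerivAt_id u).add_const b
    have h2 := (h1.pow 2).neg.div_const c
    refine h2.congr_deriv ?_
    push_cast; ring
  simpa [mul_comm] using h.exp



lemma key1 {a c A B : ℝ} (hc : 0 < c) (ha : 0 < a) (h4 : 4 * c ≤ a ^ 2)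
    (hA : a / 4 ≤ A) (hAB : A ≤ B) (hS : a ≤ A + B) :
    B * rexp (-B ^ 2 / c) ≤ A * rexp (-A ^ 2 / c) := by
  have hA0 : 0 < A := lt_of_lt_of_le (by positivity) hA
  have h1 : (B - A) * (A + B) / c + 1 ≤ rexp ((B - A) * (A + B) / c) := add_one_le_exp _
  have h2 : B ≤ A * rexp ((B - A) * (A + B) / c) := by
    have h3 : B ≤ A * ((B - A) * (A + B) / c + 1) := by
      rw [mul_add, mul_one, ← sub_le_iff_le_add, mul_div_assoc']
      rw [le_div_iff₀ hc]
      have hc_le : c ≤ A * (A + B) := by nlinarith [mul_le_mul hA hS (by positivity : (0:ℝ) ≤ a) hA0.le]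
      nlinarith [mul_nonneg (sub_nonneg.mpr hAB) (sub_nonneg.mpr hc_le)]
    exact h3.trans (mul_le_mul_of_nonneg_left h1 hA0.le)
  calc B * rexp (-B ^ 2 / c) ≤ A * rexp ((B - A) * (A + B) / c) * rexp (-B ^ 2 / c) :=
        mul_le_mul_of_nonneg_right h2 (exp_pos _).le
    _ = A * rexp (-A ^ 2 / c) := by
        rw [mul_assoc, ← Real.exp_add]
        congr 2
        field_simp; ring

lemma key2 {a c k u : ℝ} (hc : 0 < c) (ha : 0 < a) (hk : 1 ≤ k)
    (hu0 : 0 ≤ u) (hu : u ≤ a / 4) :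
    (k * a - u) * rexp (-(k * a - u) ^ 2 / c) - (k * a + u) * rexp (-(k * a + u) ^ 2 / c)
      ≤ 4 * k ^ 2 * a ^ 2 / c * rexp (-(k * a ^ 2) / (2 * c)) * (u * rexp (-u ^ 2 / c)) := by
  have hk0 : 0 < k := lt_of_lt_of_le one_pos hk
  have hXpos : 0 < rexp (-(k * a - u) ^ 2 / c) := exp_pos _
  have hYpos : 0 < rexp (-(k * a + u) ^ 2 / c) := exp_pos _
  have h2 : rexp (-(k * a + u) ^ 2 / c)
      = rexp (-(k * a - u) ^ 2 / c) * rexp (-(4 * k * a * u / c)) := by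
    rw [← Real.exp_add]; congr 1; field_simp; ring
  have hXY : rexp (-(k * a - u) ^ 2 / c) - rexp (-(k * a + u) ^ 2 / c)
      ≤ rexp (-(k * a - u) ^ 2 / c) * (4 * k * a * u / c) := by
    have h1 : 1 - rexp (-(4 * k * a * u / c)) ≤ 4 * k * a * u / c := by
      nlinarith [add_one_le_exp (-(4 * k * a * u / c))]
    nlinarith [hXpos]
  have hstep : (k * a - u) * rexp (-(k * a - u) ^ 2 / c) - (k * a + u) * rexp (-(k * a + u) ^ 2 / c)
      ≤ k * a * (rexp (-(k * a - u) ^ 2 / c) - rexp (-(k * a + u) ^ 2 / c)) := by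
    nlinarith [hXpos, hYpos]
  have hXbound : rexp (-(k * a - u) ^ 2 / c)
      ≤ rexp (-(k * a ^ 2) / (2 * c)) * rexp (-u ^ 2 / c) := by
    rw [← Real.exp_add, exp_le_exp]
    rw [show -(k * a ^ 2) / (2 * c) + -u ^ 2 / c = (-(k * a ^ 2) / 2 + -u ^ 2) / c by
      field_simp]
    gcongr
    nlinarith [mul_nonneg (mul_nonneg hk0.le ha.le) (by linarith : (0:ℝ) ≤ a / 2 - 2 * u),
      mul_nonneg (sub_nonneg.mpr hk) (sq_nonneg a)]
  have h5 : k * a * (rexp (-(k * a - u) ^ 2 / c) - rexp (-(k * a + u) ^ 2 / c))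
      ≤ k * a * (rexp (-(k * a - u) ^ 2 / c) * (4 * k * a * u / c)) :=
    mul_le_mul_of_nonneg_left hXY (by positivity)
  have h7 : 4 * k ^ 2 * a ^ 2 / c * (u * rexp (-(k * a - u) ^ 2 / c))
      ≤ 4 * k ^ 2 * a ^ 2 / c * (u * (rexp (-(k * a ^ 2) / (2 * c)) * rexp (-u ^ 2 / c))) := by
    apply mul_le_mul_of_nonneg_left (mul_le_mul_of_nonneg_left hXbound hu0) (by positivity)
  have h6 : k * a * (rexp (-(k * a - u) ^ 2 / c) * (4 * k * a * u / c))
      = 4 * k ^ 2 * a ^ 2 / c * (u * rexp (-(k * a - u) ^ 2 / c)) := by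
    field_simp
  have h8 : 4 * k ^ 2 * a ^ 2 / c * (u * (rexp (-(k * a ^ 2) / (2 * c)) * rexp (-u ^ 2 / c)))
      = 4 * k ^ 2 * a ^ 2 / c * rexp (-(k * a ^ 2) / (2 * c)) * (u * rexp (-u ^ 2 / c)) := by
    ring
  linarith [h5, h7, hstep]

lemma sin_nat_mul_le (m : ℕ) (x : ℝ) : |Real.sin (m * x)| ≤ m * |Real.sin x| := by
  induction m with
  | zero => simp
  | succ n ih =>
    have h : ((n : ℝ) + 1) * x = n * x + x := by ring
    push_cast
    rw [h, Real.sin_add]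
    calc |Real.sin (n * x) * Real.cos x + Real.cos (n * x) * Real.sin x|
        ≤ |Real.sin (n * x) * Real.cos x| + |Real.cos (n * x) * Real.sin x| := abs_add_le _ _
      _ = |Real.sin (n * x)| * |Real.cos x| + |Real.cos (n * x)| * |Real.sin x| := by
          rw [abs_mul, abs_mul]
      _ ≤ (n : ℝ) * |Real.sin x| + 1 * |Real.sin x| := by
          have c1 := abs_cos_le_one x
          have c2 := abs_cos_le_one (n * x)
          have s1 := abs_nonneg (Real.sin (n * x))
          have s2 := abs_nonneg (Real.sin x)
          nlinarith [ih, mul_nonneg s1 (by linarith : (0:ℝ) ≤ 1 - |Real.cos x|),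
            mul_nonneg s2 (by linarith : (0:ℝ) ≤ 1 - |Real.cos (n * x)|)]
      _ = ((n : ℝ) + 1) * |Real.sin x| := by ring

lemma key3 {θ1 θ2 : ℝ} (h1 : 0 ≤ θ1) (h12 : θ1 ≤ θ2) (h2 : θ2 ≤ π) (m : ℕ) :
    |Real.cos (m * θ1) - Real.cos (m * θ2)| ≤ (m : ℝ) ^ 2 * (Real.cos θ1 - Real.cos θ2) := by
  set p := (θ1 + θ2) / 2 with hp_def
  set q := (θ2 - θ1) / 2 with hq_def
  have hp : 0 ≤ Real.sin p := sin_nonneg_of_nonneg_of_le_pi (by simp [hp_def]; linarith)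
    (by simp [hp_def]; linarith)
  have hq : 0 ≤ Real.sin q := sin_nonneg_of_nonneg_of_le_pi (by simp [hq_def]; linarith)
    (by simp [hq_def]; nlinarith [pi_pos])
  have key : Real.cos (m * θ1) - Real.cos (m * θ2) = 2 * Real.sin (m * p) * Real.sin (m * q) := by
    rw [Real.cos_sub_cos, show (m * θ1 + m * θ2) / 2 = m * p by rw [hp_def]; ring,
      show (m * θ1 - m * θ2) / 2 = -(m * q) by rw [hq_def]; ring, Real.sin_neg]
    ring
  have hd : Real.cos θ1 - Real.cos θ2 = 2 * Real.sin p * Real.sin q := by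
    rw [Real.cos_sub_cos, show (θ1 + θ2) / 2 = p by rw [hp_def],
      show (θ1 - θ2) / 2 = -q by rw [hq_def]; ring, Real.sin_neg]
    ring
  rw [key, hd]
  have b1 := sin_nat_mul_le m p
  have b2 := sin_nat_mul_le m q
  have hprod : |Real.sin (m * p)| * |Real.sin (m * q)| ≤ (m * |Real.sin p|) * (m * |Real.sin q|) :=
    mul_le_mul b1 b2 (abs_nonneg _) (by positivity)
  rw [abs_of_nonneg hp] at hprod
  rw [abs_of_nonneg hq] at hprod
  calc |2 * Real.sin (m * p) * Real.sin (m * q)|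
      = 2 * (|Real.sin (m * p)| * |Real.sin (m * q)|) := by
        rw [abs_mul, abs_mul]; simp [abs_of_nonneg]; ring
    _ ≤ 2 * ((m * Real.sin p) * (m * Real.sin q)) := by linarith
    _ = (m : ℝ) ^ 2 * (2 * Real.sin p * Real.sin q) := by ring

lemma sq_le_four_pow (k : ℕ) : ((k : ℝ) + 1) ^ 2 ≤ 4 ^ k := by
  induction k with
  | zero => norm_num
  | succ n ih =>
    have : ((n : ℝ) + 1 + 1) ^ 2 ≤ 4 * ((n : ℝ) + 1) ^ 2 := by nlinarith [Nat.cast_nonneg (α := ℝ) n]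
    push_cast
    calc ((n : ℝ) + 1 + 1) ^ 2 ≤ 4 * ((n : ℝ) + 1) ^ 2 := this
      _ ≤ 4 * 4 ^ n := by linarith
      _ = 4 ^ (n + 1) := by ring



lemma tsum_int_pair {f : ℤ → ℝ} (hf : Summable f) :
    ∑' n : ℤ, f n = ∑' k : ℕ, (f k + f (-(k + 1))) :=
  (tsum_nat_add_neg_add_one hf).symm

lemma tsum_int_decomp {f : ℤ → ℝ} (hf : Summable f) :
    ∑' n : ℤ, f n = f 0 + ∑' k : ℕ, (f (k + 1) + f (-(k + 1))) := by
  have h1 : Summable (fun n : ℕ => f n) := hf.comp_injective Nat.cast_injective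
  have h1' : Summable (fun n : ℕ => f (n + 1)) := by
    apply Summable.congr (hf.comp_injective (i := fun n : ℕ => (n : ℤ) + 1) ?_)
    · intro n; rfl
    · intro x y h
      have h' : (x : ℤ) = (y : ℤ) := by exact add_left_injective 1 h
      exact_mod_cast h'
  have h2 : Summable (fun n : ℕ => f (-(n + 1))) := by
    apply Summable.congr (hf.comp_injective (i := fun n : ℕ => -((n : ℤ) + 1)) ?_)
    · intro n; rfl
    · intro x y h
      have h' : (x : ℤ) + 1 = (y : ℤ) + 1 := neg_inj.mp h
      exact_mod_cast add_left_injective 1 h'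
  rw [tsum_of_nat_of_neg_add_one h1 h2, Summable.tsum_eq_zero_add h1, add_assoc, ← Summable.tsum_add ?_ h2]
  · congr 1
  · apply h1'.congr; intro n; congr 1



lemma summable_pos' {a c : ℝ} (ha : 0 < a) (hc : 0 < c) (u : ℝ) :
    Summable (fun n : ℕ => rexp (-(u + ((n : ℝ) + 1) * a) ^ 2 / c)) := by
  apply (summable_nat ha hc (u + a)).congr
  intro n; congr 2; push_cast; ring

lemma summable_neg' {a c : ℝ} (ha : 0 < a) (hc : 0 < c) (u : ℝ) :
    Summable (fun n : ℕ => rexp (-(u + -((n : ℝ) + 1) * a) ^ 2 / c)) := by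
  apply (summable_nat ha hc (a - u)).congr
  intro n; congr 2; push_cast; ring

lemma summable_nat0 {a c : ℝ} (ha : 0 < a) (hc : 0 < c) (u : ℝ) :
    Summable (fun n : ℕ => rexp (-(u + (n : ℝ) * a) ^ 2 / c)) := summable_nat ha hc u

lemma decomp_pairs {a c : ℝ} (ha : 0 < a) (hc : 0 < c) (u : ℝ) :
    ∑' n : ℤ, rexp (-(u + (n : ℝ) * a) ^ 2 / c)
      = ∑' k : ℕ, (rexp (-(u + (k : ℝ) * a) ^ 2 / c) + rexp (-(u + -((k : ℝ) + 1) * a) ^ 2 / c)) := by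
  rw [tsum_int_pair (summable_int ha hc u)]
  congr 1; funext k; congr 3 <;> push_cast <;> ring

lemma decomp_zero {a c : ℝ} (ha : 0 < a) (hc : 0 < c) (u : ℝ) :
    ∑' n : ℤ, rexp (-(u + (n : ℝ) * a) ^ 2 / c)
      = rexp (-u ^ 2 / c)
        + ∑' k : ℕ, (rexp (-(u + ((k : ℝ) + 1) * a) ^ 2 / c)
          + rexp (-(u + -((k : ℝ) + 1) * a) ^ 2 / c)) := by
  rw [tsum_int_decomp (summable_int ha hc u)]
  congr 1
  · norm_num
  · congr 1; funext k; congr 3 <;> push_cast <;> ring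

lemma pair2_anti {a c : ℝ} (hc : 0 < c) (ha : 0 < a) (h4 : 4 * c ≤ a ^ 2) (k : ℕ) :
    AntitoneOn (fun u : ℝ => rexp (-(u + (k : ℝ) * a) ^ 2 / c)
      + rexp (-(u + -((k : ℝ) + 1) * a) ^ 2 / c)) (Icc (a / 4) (a / 2)) := by
  have hder : ∀ u : ℝ, HasDerivAt (fun u : ℝ => rexp (-(u + (k : ℝ) * a) ^ 2 / c)
      + rexp (-(u + -((k : ℝ) + 1) * a) ^ 2 / c))
      (-(2 * (u + (k : ℝ) * a)) / c * rexp (-(u + (k : ℝ) * a) ^ 2 / c)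
        + -(2 * (u + -((k : ℝ) + 1) * a)) / c * rexp (-(u + -((k : ℝ) + 1) * a) ^ 2 / c)) u :=
    fun u => (hasDerivAt_gauss c ((k : ℝ) * a) u).add (hasDerivAt_gauss c (-((k : ℝ) + 1) * a) u)
  apply antitoneOn_of_deriv_nonpos (convex_Icc _ _)
  · exact fun u _ => (hder u).continuousAt.continuousWithinAt
  · exact fun u hu => ((hder u).differentiableAt).differentiableWithinAt
  · intro u hu
    rw [interior_Icc, mem_Ioo] at hu
    rw [(hder u).deriv]
    have hY : rexp (-(u + -((k : ℝ) + 1) * a) ^ 2 / c)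
        = rexp (-(((k : ℝ) + 1) * a - u) ^ 2 / c) := by congr 1; ring
    have hkey := key1 (A := u + (k : ℝ) * a) (B := ((k : ℝ) + 1) * a - u) hc ha h4
      (by nlinarith [hu.1, Nat.cast_nonneg (α := ℝ) k])
      (by nlinarith [hu.2, Nat.cast_nonneg (α := ℝ) k])
      (by nlinarith [mul_nonneg (Nat.cast_nonneg (α := ℝ) k) ha.le])
    rw [hY]
    have hrw : -(2 * (u + (k : ℝ) * a)) / c * rexp (-(u + (k : ℝ) * a) ^ 2 / c)
        + -(2 * (u + -((k : ℝ) + 1) * a)) / c * rexp (-(((k : ℝ) + 1) * a - u) ^ 2 / c)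
        = 2 / c * ((((k : ℝ) + 1) * a - u) * rexp (-(((k : ℝ) + 1) * a - u) ^ 2 / c)
          - (u + (k : ℝ) * a) * rexp (-(u + (k : ℝ) * a) ^ 2 / c)) := by ring
    rw [hrw]
    exact mul_nonpos_of_nonneg_of_nonpos (by positivity) (by linarith)

lemma pair1_anti {a c : ℝ} (hc : 0 < c) (ha : 0 < a) (k : ℕ) :
    AntitoneOn (fun u : ℝ => rexp (-(u + ((k : ℝ) + 1) * a) ^ 2 / c)
      + rexp (-(u + -((k : ℝ) + 1) * a) ^ 2 / c)
      + 4 * ((k : ℝ) + 1) ^ 2 * a ^ 2 / c * rexp (-(((k : ℝ) + 1) * a ^ 2) / (2 * c))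
        * rexp (-u ^ 2 / c)) (Icc 0 (a / 4)) := by
  have hg0 : ∀ u : ℝ, HasDerivAt (fun u : ℝ => rexp (-u ^ 2 / c))
      (-(2 * u) / c * rexp (-u ^ 2 / c)) u := by
    intro u
    have := hasDerivAt_gauss c 0 u
    simpa using this
  have hder : ∀ u : ℝ, HasDerivAt (fun u : ℝ => rexp (-(u + ((k : ℝ) + 1) * a) ^ 2 / c)
      + rexp (-(u + -((k : ℝ) + 1) * a) ^ 2 / c)
      + 4 * ((k : ℝ) + 1) ^ 2 * a ^ 2 / c * rexp (-(((k : ℝ) + 1) * a ^ 2) / (2 * c))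
        * rexp (-u ^ 2 / c))
      (-(2 * (u + ((k : ℝ) + 1) * a)) / c * rexp (-(u + ((k : ℝ) + 1) * a) ^ 2 / c)
        + -(2 * (u + -((k : ℝ) + 1) * a)) / c * rexp (-(u + -((k : ℝ) + 1) * a) ^ 2 / c)
        + 4 * ((k : ℝ) + 1) ^ 2 * a ^ 2 / c * rexp (-(((k : ℝ) + 1) * a ^ 2) / (2 * c))
          * (-(2 * u) / c * rexp (-u ^ 2 / c))) u :=
    fun u => ((hasDerivAt_gauss c (((k : ℝ) + 1) * a) u).add
      (hasDerivAt_gauss c (-((k : ℝ) + 1) * a) u)).add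
      (((hg0 u).const_mul (4 * ((k : ℝ) + 1) ^ 2 * a ^ 2 / c
        * rexp (-(((k : ℝ) + 1) * a ^ 2) / (2 * c)))))
  apply antitoneOn_of_deriv_nonpos (convex_Icc _ _)
  · exact fun u _ => (hder u).continuousAt.continuousWithinAt
  · exact fun u hu => ((hder u).differentiableAt).differentiableWithinAt
  · intro u hu
    rw [interior_Icc, mem_Ioo] at hu
    rw [(hder u).deriv]
    have hY : rexp (-(u + -((k : ℝ) + 1) * a) ^ 2 / c)
        = rexp (-(((k : ℝ) + 1) * a - u) ^ 2 / c) := by congr 1; ring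
    have hX : rexp (-(u + ((k : ℝ) + 1) * a) ^ 2 / c)
        = rexp (-(((k : ℝ) + 1) * a + u) ^ 2 / c) := by congr 1; ring
    have hkey := key2 (k := (k : ℝ) + 1) hc ha
      (by nlinarith [Nat.cast_nonneg (α := ℝ) k]) hu.1.le hu.2.le
    rw [hY, hX]
    have hrw : -(2 * (u + ((k : ℝ) + 1) * a)) / c * rexp (-(((k : ℝ) + 1) * a + u) ^ 2 / c)
        + -(2 * (u + -((k : ℝ) + 1) * a)) / c * rexp (-(((k : ℝ) + 1) * a - u) ^ 2 / c)
        + 4 * ((k : ℝ) + 1) ^ 2 * a ^ 2 / c * rexp (-(((k : ℝ) + 1) * a ^ 2) / (2 * c))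
          * (-(2 * u) / c * rexp (-u ^ 2 / c))
        = 2 / c * (((((k : ℝ) + 1) * a - u) * rexp (-(((k : ℝ) + 1) * a - u) ^ 2 / c)
            - (((k : ℝ) + 1) * a + u) * rexp (-(((k : ℝ) + 1) * a + u) ^ 2 / c))
          - 4 * ((k : ℝ) + 1) ^ 2 * a ^ 2 / c * rexp (-(((k : ℝ) + 1) * a ^ 2) / (2 * c))
            * (u * rexp (-u ^ 2 / c))) := by ring
    rw [hrw]
    exact mul_nonpos_of_nonneg_of_nonpos (by positivity) (by linarith)

lemma exp_half_ge {x : ℝ} (h12 : 12 ≤ x) : 4 * (x + 1) ≤ rexp (x / 2) := by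
  have h1 : 1 + x / 12 ≤ rexp (x / 12) := by linarith [add_one_le_exp (x / 12)]
  have h2 : rexp (x / 2) = rexp (x / 12) ^ 6 := by
    rw [← Real.exp_nat_mul]; congr 1; push_cast; ring
  have h0 : (0 : ℝ) ≤ 1 + x / 12 := by linarith
  have h3 : (1 + x / 12) ^ 6 ≤ rexp (x / 12) ^ 6 := pow_le_pow_left₀ h0 h1 6
  have h5 : (2 : ℝ) ^ 4 ≤ (1 + x / 12) ^ 4 := pow_le_pow_left₀ (by norm_num) (by linarith) 4
  have h6 : (2 : ℝ) ^ 4 * (1 + x / 12) ^ 2 ≤ (1 + x / 12) ^ 4 * (1 + x / 12) ^ 2 :=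
    mul_le_mul_of_nonneg_right h5 (sq_nonneg _)
  have h7 : (1 + x / 12) ^ 4 * (1 + x / 12) ^ 2 = (1 + x / 12) ^ 6 := by ring
  nlinarith [sq_nonneg (x / 6 - 1)]

lemma beta_facts {a c : ℝ} (hc : 0 < c) (ha : 0 < a) (h12 : 12 * c ≤ a ^ 2) :
    Summable (fun k : ℕ => 4 * ((k : ℝ) + 1) ^ 2 * a ^ 2 / c * rexp (-(((k : ℝ) + 1) * a ^ 2) / (2 * c)))
      ∧ ∑' k : ℕ, (4 * ((k : ℝ) + 1) ^ 2 * a ^ 2 / c * rexp (-(((k : ℝ) + 1) * a ^ 2) / (2 * c))) ≤ 1 := by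
  have hρ : 12 ≤ a ^ 2 / c := by rw [le_div_iff₀ hc]; linarith
  have hexp := exp_half_ge hρ
  have hxpos : 0 < rexp (-(a ^ 2) / (2 * c)) := exp_pos _
  have hx1 : 4 * (a ^ 2 / c + 1) * rexp (-(a ^ 2) / (2 * c)) ≤ 1 := by
    calc 4 * (a ^ 2 / c + 1) * rexp (-(a ^ 2) / (2 * c))
        ≤ rexp (a ^ 2 / c / 2) * rexp (-(a ^ 2) / (2 * c)) :=
          mul_le_mul_of_nonneg_right hexp hxpos.le
      _ = 1 := by
          rw [← Real.exp_add, show a ^ 2 / c / 2 + -(a ^ 2) / (2 * c) = 0 by field_simp; ring,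
            Real.exp_zero]
  have h4x : 4 * rexp (-(a ^ 2) / (2 * c)) < 1 := by nlinarith
  have hterm : ∀ k : ℕ, 4 * ((k : ℝ) + 1) ^ 2 * a ^ 2 / c * rexp (-(((k : ℝ) + 1) * a ^ 2) / (2 * c))
      ≤ (a ^ 2 / c * (4 * rexp (-(a ^ 2) / (2 * c)))) * (4 * rexp (-(a ^ 2) / (2 * c))) ^ k := by
    intro k
    have hpow : rexp (-(((k : ℝ) + 1) * a ^ 2) / (2 * c)) = rexp (-(a ^ 2) / (2 * c)) ^ (k + 1) := by
      rw [← Real.exp_nat_mul]; congr 1; push_cast; field_simp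
    rw [hpow]
    have h4p : 4 * ((k : ℝ) + 1) ^ 2 ≤ 4 ^ (k + 1) := by
      have h := sq_le_four_pow k
      calc 4 * ((k : ℝ) + 1) ^ 2 ≤ 4 * 4 ^ k := by linarith
        _ = 4 ^ (k + 1) := by rw [pow_succ]; ring
    have key : 4 * ((k : ℝ) + 1) ^ 2 * a ^ 2 / c * rexp (-(a ^ 2) / (2 * c)) ^ (k + 1)
        = (4 * ((k : ℝ) + 1) ^ 2) * (a ^ 2 / c * rexp (-(a ^ 2) / (2 * c)) ^ (k + 1)) := by ring
    rw [key]
    calc (4 * ((k : ℝ) + 1) ^ 2) * (a ^ 2 / c * rexp (-(a ^ 2) / (2 * c)) ^ (k + 1))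
        ≤ (4 : ℝ) ^ (k + 1) * (a ^ 2 / c * rexp (-(a ^ 2) / (2 * c)) ^ (k + 1)) :=
          mul_le_mul_of_nonneg_right h4p (by positivity)
      _ = (a ^ 2 / c * (4 * rexp (-(a ^ 2) / (2 * c)))) * (4 * rexp (-(a ^ 2) / (2 * c))) ^ k := by
          rw [mul_pow]; ring
  have hgeom : Summable (fun k : ℕ => (a ^ 2 / c * (4 * rexp (-(a ^ 2) / (2 * c))))
      * (4 * rexp (-(a ^ 2) / (2 * c))) ^ k) :=
    (summable_geometric_of_lt_one (by positivity) h4x).mul_left _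
  have hβsum : Summable (fun k : ℕ => 4 * ((k : ℝ) + 1) ^ 2 * a ^ 2 / c
      * rexp (-(((k : ℝ) + 1) * a ^ 2) / (2 * c))) := by
    apply Summable.of_nonneg_of_le (fun k => by positivity) hterm hgeom
  refine ⟨hβsum, ?_⟩
  have h1m : 0 < 1 - 4 * rexp (-(a ^ 2) / (2 * c)) := by linarith
  calc ∑' k : ℕ, (4 * ((k : ℝ) + 1) ^ 2 * a ^ 2 / c * rexp (-(((k : ℝ) + 1) * a ^ 2) / (2 * c)))
      ≤ ∑' k : ℕ, (a ^ 2 / c * (4 * rexp (-(a ^ 2) / (2 * c)))) * (4 * rexp (-(a ^ 2) / (2 * c))) ^ k :=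
        Summable.tsum_le_tsum hterm hβsum hgeom
    _ = (a ^ 2 / c * (4 * rexp (-(a ^ 2) / (2 * c)))) * (1 - 4 * rexp (-(a ^ 2) / (2 * c)))⁻¹ := by
        rw [tsum_mul_left, tsum_geometric_of_lt_one (by positivity) h4x]
    _ ≤ (1 - 4 * rexp (-(a ^ 2) / (2 * c))) * (1 - 4 * rexp (-(a ^ 2) / (2 * c)))⁻¹ := by
        apply mul_le_mul_of_nonneg_right ?_ (by positivity)
        have : a ^ 2 / c * (4 * rexp (-(a ^ 2) / (2 * c))) + 4 * rexp (-(a ^ 2) / (2 * c))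
            = 4 * (a ^ 2 / c + 1) * rexp (-(a ^ 2) / (2 * c)) := by ring
        linarith [hx1, this]
    _ = 1 := mul_inv_cancel₀ (ne_of_gt h1m)

lemma region2 {a c : ℝ} (hc : 0 < c) (ha : 0 < a) (h4 : 4 * c ≤ a ^ 2) {s t : ℝ}
    (hs : a / 4 ≤ s) (hst : s ≤ t) (ht : t ≤ a / 2) :
    ∑' n : ℤ, rexp (-(t + (n : ℝ) * a) ^ 2 / c) ≤ ∑' n : ℤ, rexp (-(s + (n : ℝ) * a) ^ 2 / c) := by
  rw [decomp_pairs ha hc s, decomp_pairs ha hc t]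
  have hmem_s : s ∈ Icc (a / 4) (a / 2) := mem_Icc.mpr ⟨hs, hst.trans ht⟩
  have hmem_t : t ∈ Icc (a / 4) (a / 2) := mem_Icc.mpr ⟨hs.trans hst, ht⟩
  apply Summable.tsum_le_tsum
  · intro k
    exact pair2_anti hc ha h4 k hmem_s hmem_t hst
  · exact (summable_nat0 ha hc t).add (summable_neg' ha hc t)
  · exact (summable_nat0 ha hc s).add (summable_neg' ha hc s)

lemma region1 {a c : ℝ} (hc : 0 < c) (ha : 0 < a) (h12 : 12 * c ≤ a ^ 2) {s t : ℝ}
    (hs : 0 ≤ s) (hst : s ≤ t) (ht : t ≤ a / 4) :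
    ∑' n : ℤ, rexp (-(t + (n : ℝ) * a) ^ 2 / c) ≤ ∑' n : ℤ, rexp (-(s + (n : ℝ) * a) ^ 2 / c) := by
  obtain ⟨hβsum, hβle⟩ := beta_facts hc ha h12
  have hmem_s : s ∈ Icc 0 (a / 4) := mem_Icc.mpr ⟨hs, hst.trans ht⟩
  have hmem_t : t ∈ Icc 0 (a / 4) := mem_Icc.mpr ⟨hs.trans hst, ht⟩
  have hd : rexp (-t ^ 2 / c) ≤ rexp (-s ^ 2 / c) := by
    apply exp_le_exp.mpr
    have hsq : s ^ 2 ≤ t ^ 2 := pow_le_pow_left₀ hs hst 2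
    rw [neg_div, neg_div, neg_le_neg_iff]
    gcongr
  have hpair : ∀ k : ℕ,
      (rexp (-(t + ((k : ℝ) + 1) * a) ^ 2 / c) + rexp (-(t + -((k : ℝ) + 1) * a) ^ 2 / c))
        - (rexp (-(s + ((k : ℝ) + 1) * a) ^ 2 / c) + rexp (-(s + -((k : ℝ) + 1) * a) ^ 2 / c))
      ≤ 4 * ((k : ℝ) + 1) ^ 2 * a ^ 2 / c * rexp (-(((k : ℝ) + 1) * a ^ 2) / (2 * c))
          * (rexp (-s ^ 2 / c) - rexp (-t ^ 2 / c)) := by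
    intro k
    have h1 := pair1_anti hc ha k hmem_s hmem_t hst
    simp only at h1
    nlinarith [h1]
  have hφs : Summable (fun k : ℕ => rexp (-(s + ((k : ℝ) + 1) * a) ^ 2 / c)
      + rexp (-(s + -((k : ℝ) + 1) * a) ^ 2 / c)) :=
    (summable_pos' ha hc s).add (summable_neg' ha hc s)
  have hφt : Summable (fun k : ℕ => rexp (-(t + ((k : ℝ) + 1) * a) ^ 2 / c)
      + rexp (-(t + -((k : ℝ) + 1) * a) ^ 2 / c)) :=
    (summable_pos' ha hc t).add (summable_neg' ha hc t)
  rw [decomp_zero ha hc s, decomp_zero ha hc t]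
  have hsum_le : ∑' k : ℕ, ((rexp (-(t + ((k : ℝ) + 1) * a) ^ 2 / c)
        + rexp (-(t + -((k : ℝ) + 1) * a) ^ 2 / c))
      - (rexp (-(s + ((k : ℝ) + 1) * a) ^ 2 / c) + rexp (-(s + -((k : ℝ) + 1) * a) ^ 2 / c)))
      ≤ ∑' k : ℕ, (4 * ((k : ℝ) + 1) ^ 2 * a ^ 2 / c * rexp (-(((k : ℝ) + 1) * a ^ 2) / (2 * c))
        * (rexp (-s ^ 2 / c) - rexp (-t ^ 2 / c))) :=
    Summable.tsum_le_tsum hpair (hφt.sub hφs) (hβsum.mul_right _)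
  rw [Summable.tsum_sub hφt hφs, tsum_mul_right] at hsum_le
  have hfin : (∑' k : ℕ, (4 * ((k : ℝ) + 1) ^ 2 * a ^ 2 / c
        * rexp (-(((k : ℝ) + 1) * a ^ 2) / (2 * c))))
      * (rexp (-s ^ 2 / c) - rexp (-t ^ 2 / c))
      ≤ 1 * (rexp (-s ^ 2 / c) - rexp (-t ^ 2 / c)) :=
    mul_le_mul_of_nonneg_right hβle (by linarith)
  linarith

lemma poisson {a c : ℝ} (ha : 0 < a) (hc : 0 < c) (u : ℝ) :
    ∑' n : ℤ, rexp (-(u + (n : ℝ) * a) ^ 2 / c)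
      = Real.sqrt (π * c / a ^ 2)
        * ∑' n : ℤ, rexp (-π * (π * c / a ^ 2) * (n : ℝ) ^ 2)
          * Real.cos (2 * π * (u / a) * (n : ℝ)) := by
  set A := π * c / a ^ 2 with hA_def
  have hA : 0 < A := by rw [hA_def]; positivity
  set b : ℂ := -Complex.I * ((u / a : ℝ) : ℂ) with hb_def
  have key := Complex.tsum_exp_neg_quadratic (a := (A : ℂ)) (by simpa using hA) b
  have hterm2 : ∀ n : ℤ, Complex.exp (-(π : ℂ) / (A : ℂ) * ((n : ℂ) + Complex.I * b) ^ 2)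
      = ((rexp (-(u + (n : ℝ) * a) ^ 2 / c) : ℝ) : ℂ) := by
    intro n
    have h1 : Complex.I * b = ((u / a : ℝ) : ℂ) := by
      rw [hb_def, ← mul_assoc]
      simp
    rw [h1]
    have h2 : -(π : ℂ) / (A : ℂ) * ((n : ℂ) + ((u / a : ℝ) : ℂ)) ^ 2
        = ((-(u + (n : ℝ) * a) ^ 2 / c : ℝ) : ℂ) := by
      rw [hA_def]
      have ha' : (a : ℂ) ≠ 0 := Complex.ofReal_ne_zero.mpr (ne_of_gt ha)
      have hc' : (c : ℂ) ≠ 0 := Complex.ofReal_ne_zero.mpr (ne_of_gt hc)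
      have hπ' : (π : ℂ) ≠ 0 := Complex.ofReal_ne_zero.mpr (ne_of_gt pi_pos)
      push_cast
      field_simp
      ring
    rw [h2, Complex.ofReal_exp]
  have hsum2 : ∑' n : ℤ, Complex.exp (-(π : ℂ) / (A : ℂ) * ((n : ℂ) + Complex.I * b) ^ 2)
      = ((∑' n : ℤ, rexp (-(u + (n : ℝ) * a) ^ 2 / c) : ℝ) : ℂ) := by
    rw [Complex.ofReal_tsum]
    exact tsum_congr hterm2
  have hA2 : ((Real.sqrt A : ℝ) : ℂ) = (A : ℂ) ^ (1 / 2 : ℂ) := by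
    rw [Real.sqrt_eq_rpow, Complex.ofReal_cpow hA.le]
    norm_num
  have hsqrt_ne : ((Real.sqrt A : ℝ) : ℂ) ≠ 0 :=
    Complex.ofReal_ne_zero.mpr (ne_of_gt (Real.sqrt_pos.mpr hA))
  have hone : ((Real.sqrt A : ℝ) : ℂ) * (1 / (A : ℂ) ^ (1 / 2 : ℂ)) = 1 := by
    rw [← hA2]
    field_simp
  have key2 : ((∑' n : ℤ, rexp (-(u + (n : ℝ) * a) ^ 2 / c) : ℝ) : ℂ)
      = ((Real.sqrt A : ℝ) : ℂ)
        * ∑' n : ℤ, Complex.exp (-(π : ℂ) * (A : ℂ) * (n : ℂ) ^ 2 + 2 * (π : ℂ) * b * (n : ℂ)) := by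
    rw [← hsum2, key, ← mul_assoc ((Real.sqrt A : ℝ) : ℂ), hone, one_mul]
  have hsummand : Summable (fun n : ℤ => rexp (-π * A * (n : ℝ) ^ 2)) := by
    have h := summable_int (a := Real.sqrt (π * A)) (c := 1)
      (Real.sqrt_pos.mpr (by positivity)) one_pos 0
    apply h.congr
    intro n
    congr 1
    rw [div_one, zero_add, mul_pow, Real.sq_sqrt (by positivity : (0:ℝ) ≤ π * A)]
    ring
  have hz : ∀ n : ℤ, -(π : ℂ) * (A : ℂ) * (n : ℂ) ^ 2 + 2 * (π : ℂ) * b * (n : ℂ)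
      = ((-π * A * (n : ℝ) ^ 2 : ℝ) : ℂ) + ((-(2 * π * (u / a) * (n : ℝ)) : ℝ) : ℂ) * Complex.I := by
    intro n
    rw [hb_def]
    push_cast
    ring
  have hS1 : Summable (fun n : ℤ =>
      Complex.exp (-(π : ℂ) * (A : ℂ) * (n : ℂ) ^ 2 + 2 * (π : ℂ) * b * (n : ℂ))) := by
    apply Summable.of_norm
    apply hsummand.congr
    intro n
    rw [Complex.norm_exp, hz n]
    simp only [Complex.add_re, Complex.ofReal_re, Complex.mul_I_re, Complex.ofReal_im,
      neg_zero, add_zero]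
  have hzre : ∀ n : ℤ, (Complex.exp (-(π : ℂ) * (A : ℂ) * (n : ℂ) ^ 2
        + 2 * (π : ℂ) * b * (n : ℂ))).re
      = rexp (-π * A * (n : ℝ) ^ 2) * Real.cos (2 * π * (u / a) * (n : ℝ)) := by
    intro n
    rw [hz n, Complex.exp_re]
    simp only [Complex.add_re, Complex.add_im, Complex.ofReal_re, Complex.ofReal_im,
      Complex.mul_I_re, Complex.mul_I_im, neg_zero, add_zero, zero_add, Real.cos_neg]
  have hfin := congrArg Complex.re key2
  rw [Complex.ofReal_re, Complex.re_ofReal_mul, Complex.re_tsum hS1] at hfin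
  rw [hfin]
  congr 1
  exact tsum_congr hzre

lemma summable_exp_neg_sq {P : ℝ} (hP : 0 < P) :
    Summable (fun n : ℤ => rexp (-(P * (n : ℝ) ^ 2))) := by
  have h := summable_int (a := Real.sqrt P) (c := 1) (Real.sqrt_pos.mpr hP) one_pos 0
  apply h.congr
  intro n
  congr 1
  rw [div_one, zero_add, mul_pow, Real.sq_sqrt hP.le]
  ring

lemma eight_exp_le {P : ℝ} (hP : (9 : ℝ) / 4 ≤ 3 * P) : 8 * rexp (-(3 * P)) ≤ 1 := by
  have h8 : (8 : ℝ) ≤ rexp (3 * P) := by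
    have h1 : rexp ((9 : ℝ) / 4) ≤ rexp (3 * P) := exp_le_exp.mpr hP
    have h2 : rexp ((9 : ℝ) / 4) = rexp 1 * rexp 1 * rexp (1 / 4) := by
      rw [← Real.exp_add, ← Real.exp_add]; norm_num
    have h3 : (2.7182818283 : ℝ) < rexp 1 := Real.exp_one_gt_d9
    have h4 : (1 : ℝ) + 1 / 4 ≤ rexp (1 / 4) := by linarith [add_one_le_exp ((1 : ℝ) / 4)]
    nlinarith [exp_pos (1 : ℝ), exp_pos ((1 : ℝ) / 4)]
  calc 8 * rexp (-(3 * P)) ≤ rexp (3 * P) * rexp (-(3 * P)) :=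
        mul_le_mul_of_nonneg_right h8 (exp_pos _).le
    _ = 1 := by rw [← Real.exp_add]; norm_num

lemma fourier_mono {a c : ℝ} (ha : 0 < a) (hc : 0 < c) (h12 : a ^ 2 ≤ 12 * c)
    {s t : ℝ} (hs : 0 ≤ s) (hst : s ≤ t) (ht : t ≤ a / 2) :
    ∑' n : ℤ, rexp (-π * (π * c / a ^ 2) * (n : ℝ) ^ 2) * Real.cos (2 * π * (t / a) * (n : ℝ))
      ≤ ∑' n : ℤ, rexp (-π * (π * c / a ^ 2) * (n : ℝ) ^ 2)
          * Real.cos (2 * π * (s / a) * (n : ℝ)) := by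
  have hπc : 0 < π * (π * c / a ^ 2) := by positivity
  set P : ℝ := π * (π * c / a ^ 2) with hP_def
  have hP : 0 < P := hπc
  set θ1 : ℝ := 2 * π * (s / a) with hθ1_def
  set θ2 : ℝ := 2 * π * (t / a) with hθ2_def
  set r : ℝ := rexp (-(3 * P)) with hr_def
  have hrpos : 0 < r := exp_pos _
  have hP94 : (9 : ℝ) / 4 ≤ 3 * P := by
    rw [hP_def, show 3 * (π * (π * c / a ^ 2)) = 3 * π ^ 2 * c / a ^ 2 by ring,
      le_div_iff₀ (by positivity)]
    nlinarith [mul_nonneg (by nlinarith [pi_gt_three] : (0:ℝ) ≤ π ^ 2 - 9)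
      (by linarith : (0:ℝ) ≤ 3 * c)]
  have hr8 : 8 * r ≤ 1 := eight_exp_le hP94
  have h4r : 4 * r < 1 := by linarith
  have h1m : 0 < 1 - 4 * r := by linarith
  have hθ1 : 0 ≤ θ1 := by rw [hθ1_def]; positivity
  have hθ12 : θ1 ≤ θ2 := by
    rw [hθ1_def, hθ2_def]
    have h1 : s / a ≤ t / a := by gcongr
    nlinarith [pi_pos]
  have hθ2 : θ2 ≤ π := by
    rw [hθ2_def]
    have h1 : t / a ≤ 1 / 2 := by rw [div_le_div_iff₀ ha (by norm_num)]; linarith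
    nlinarith [pi_pos]
  have hd : 0 ≤ Real.cos θ1 - Real.cos θ2 := by
    have := Real.cos_le_cos_of_nonneg_of_le_pi hθ1 hθ2 hθ12
    linarith
  set d : ℝ := Real.cos θ1 - Real.cos θ2 with hd_def
  have hPsum : Summable (fun n : ℤ => rexp (-P * (n : ℝ) ^ 2)) := by
    apply (summable_exp_neg_sq hP).congr
    intro n; congr 1; ring
  have hside : ∀ θ : ℝ, Summable (fun n : ℤ => rexp (-P * (n : ℝ) ^ 2)
      * Real.cos (θ * (n : ℝ))) := by
    intro θ
    apply Summable.of_norm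
    apply Summable.of_nonneg_of_le (fun n => norm_nonneg _) ?_ hPsum
    intro n
    rw [Real.norm_eq_abs, abs_mul, abs_of_pos (exp_pos _)]
    exact mul_le_of_le_one_right (exp_pos _).le (abs_cos_le_one _)
  set f : ℤ → ℝ := fun n => rexp (-P * (n : ℝ) ^ 2)
    * (Real.cos (θ1 * (n : ℝ)) - Real.cos (θ2 * (n : ℝ))) with hf_def
  set E : ℕ → ℝ := fun m => rexp (-P * (m : ℝ) ^ 2)
    * (Real.cos (θ1 * (m : ℝ)) - Real.cos (θ2 * (m : ℝ))) with hE_def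
  have hDf : Summable f := by
    apply ((hside θ1).sub (hside θ2)).congr
    intro n; rw [hf_def]; ring
  have hfix : ∀ θ : ℝ, ∑' n : ℤ, rexp (-π * (π * c / a ^ 2) * (n : ℝ) ^ 2) * Real.cos (θ * (n : ℝ))
      = ∑' n : ℤ, rexp (-P * (n : ℝ) ^ 2) * Real.cos (θ * (n : ℝ)) :=
    fun θ => tsum_congr (fun n => by rw [hP_def]; congr 2; ring)
  rw [hfix θ1, hfix θ2, ← sub_nonneg, ← Summable.tsum_sub (hside θ1) (hside θ2)]
  have hcongr1 : ∑' n : ℤ, (rexp (-P * (n : ℝ) ^ 2) * Real.cos (θ1 * (n : ℝ))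
        - rexp (-P * (n : ℝ) ^ 2) * Real.cos (θ2 * (n : ℝ)))
      = ∑' n : ℤ, f n :=
    tsum_congr (fun n => by rw [hf_def]; ring)
  rw [hcongr1, tsum_int_decomp hDf]
  have hf0 : f 0 = 0 := by rw [hf_def]; norm_num
  have hfpair : ∀ k : ℕ, f ((k : ℤ) + 1) + f (-((k : ℤ) + 1)) = 2 * E (k + 1) := by
    intro k
    rw [hf_def, hE_def]
    simp only
    push_cast
    rw [show θ1 * -((k : ℝ) + 1) = -(θ1 * ((k : ℝ) + 1)) by ring,
      show θ2 * -((k : ℝ) + 1) = -(θ2 * ((k : ℝ) + 1)) by ring,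
      Real.cos_neg, Real.cos_neg]
    ring_nf
  have hE1 : Summable (fun k : ℕ => E (k + 1)) := by
    apply (hDf.comp_injective (i := fun n : ℕ => (n : ℤ) + 1) ?_).congr
    · intro n
      rw [hf_def, hE_def]
      simp only [Function.comp_apply]
      push_cast
      ring_nf
    · intro x y h
      have h' : (x : ℤ) = (y : ℤ) := add_left_injective 1 h
      exact_mod_cast h'
  have hE2 : Summable (fun k : ℕ => 2 * E (k + 1)) := hE1.mul_left 2
  rw [tsum_congr hfpair, hf0, zero_add, Summable.tsum_eq_zero_add hE2]
  have hE1val : E 1 = rexp (-P) * d := by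
    rw [hE_def, hd_def]; norm_num
  have hE2sum : Summable (fun k : ℕ => 2 * E (k + 1 + 1)) := by
    exact (hE1.comp_injective (add_left_injective 1)).mul_left 2
  have hlow : ∀ k : ℕ, -(2 * rexp (-P) * d * (4 * r) ^ (k + 1)) ≤ 2 * E (k + 1 + 1) := by
    intro k
    have hkey := key3 hθ1 hθ12 hθ2 (k + 2)
    have h1 : |Real.cos (θ1 * ((k : ℝ) + 1 + 1)) - Real.cos (θ2 * ((k : ℝ) + 1 + 1))|
        ≤ ((k : ℝ) + 1 + 1) ^ 2 * d := by
      rw [mul_comm θ1, mul_comm θ2]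
      rw [hd_def]
      convert hkey using 3 <;> push_cast <;> ring
    have hexp : rexp (-P * ((k : ℝ) + 1 + 1) ^ 2) ≤ rexp (-P) * rexp (-(3 * P)) ^ (k + 1) := by
      rw [← Real.exp_nat_mul, ← Real.exp_add, exp_le_exp]
      push_cast
      nlinarith [mul_nonneg hP.le (by positivity : (0 : ℝ) ≤ (k : ℝ) ^ 2 + k)]
    have hsq : ((k : ℝ) + 1 + 1) ^ 2 ≤ 4 ^ (k + 1) := by
      have := sq_le_four_pow (k + 1)
      push_cast at this ⊢
      linarith
    have h2 : rexp (-P * ((k : ℝ) + 1 + 1) ^ 2) * ((k : ℝ) + 1 + 1) ^ 2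
        ≤ rexp (-P) * (4 * r) ^ (k + 1) := by
      calc rexp (-P * ((k : ℝ) + 1 + 1) ^ 2) * ((k : ℝ) + 1 + 1) ^ 2
          ≤ (rexp (-P) * rexp (-(3 * P)) ^ (k + 1)) * 4 ^ (k + 1) :=
            mul_le_mul hexp hsq (by positivity) (by positivity)
        _ = rexp (-P) * (4 * r) ^ (k + 1) := by rw [hr_def, mul_pow]; ring
    have hEval : E (k + 1 + 1) = rexp (-P * ((k : ℝ) + 1 + 1) ^ 2)
        * (Real.cos (θ1 * ((k : ℝ) + 1 + 1)) - Real.cos (θ2 * ((k : ℝ) + 1 + 1))) := by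
      rw [hE_def]
      simp only
      push_cast
      ring_nf
    have hy : -(((k : ℝ) + 1 + 1) ^ 2 * d)
        ≤ Real.cos (θ1 * ((k : ℝ) + 1 + 1)) - Real.cos (θ2 * ((k : ℝ) + 1 + 1)) :=
      (abs_le.mp h1).1
    have h3 : rexp (-P * ((k : ℝ) + 1 + 1) ^ 2) * -(((k : ℝ) + 1 + 1) ^ 2 * d)
        ≤ E (k + 1 + 1) := by
      rw [hEval]
      exact mul_le_mul_of_nonneg_left hy (exp_pos _).le
    have h4 : (rexp (-P * ((k : ℝ) + 1 + 1) ^ 2) * ((k : ℝ) + 1 + 1) ^ 2) * d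
        ≤ (rexp (-P) * (4 * r) ^ (k + 1)) * d :=
      mul_le_mul_of_nonneg_right h2 hd
    linarith [h3, h4]
  have hgeo : Summable (fun k : ℕ => -(2 * rexp (-P) * d * (4 * r) ^ (k + 1))) := by
    apply Summable.neg
    apply ((summable_geometric_of_lt_one (by positivity) h4r).mul_left
      (2 * rexp (-P) * d * (4 * r))).congr
    intro k; ring
  have hsum_ge := Summable.tsum_le_tsum hlow hgeo hE2sum
  have hgeoval : ∑' k : ℕ, -(2 * rexp (-P) * d * (4 * r) ^ (k + 1))
      = -(2 * rexp (-P) * d * (4 * r)) * (1 - 4 * r)⁻¹ := by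
    have hfun : (fun k : ℕ => -(2 * rexp (-P) * d * (4 * r) ^ (k + 1)))
        = fun k : ℕ => (-(2 * rexp (-P) * d * (4 * r))) * (4 * r) ^ k := by
      funext k; ring
    rw [hfun, tsum_mul_left, tsum_geometric_of_lt_one (by positivity) h4r]
  rw [hgeoval] at hsum_ge
  have hfrac : 4 * r * (1 - 4 * r)⁻¹ ≤ 1 := by
    calc 4 * r * (1 - 4 * r)⁻¹ ≤ (1 - 4 * r) * (1 - 4 * r)⁻¹ :=
          mul_le_mul_of_nonneg_right (by linarith) (by positivity)
      _ = 1 := mul_inv_cancel₀ (ne_of_gt h1m)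
  have hCpos : 0 ≤ 2 * rexp (-P) * d := by positivity
  have hfin : -(2 * rexp (-P) * d) ≤ -(2 * rexp (-P) * d * (4 * r)) * (1 - 4 * r)⁻¹ := by
    have h5 : 2 * rexp (-P) * d * (4 * r * (1 - 4 * r)⁻¹) ≤ 2 * rexp (-P) * d * 1 :=
      mul_le_mul_of_nonneg_left hfrac hCpos
    have h6 : -(2 * rexp (-P) * d * (4 * r)) * (1 - 4 * r)⁻¹
        = -(2 * rexp (-P) * d * (4 * r * (1 - 4 * r)⁻¹)) := by ring
    rw [h6]
    linarith
  rw [hE1val]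
  clear_value P θ1 θ2 r d f E
  linarith [hfin.trans hsum_ge]

end PG


/-- for `α ≠ 0`, `σ > 0` and `f(t) = ∑_{k∈ℤ} exp(−(t + kα)²/(2σ²))`,
`f` is even, `|α|`-periodic, and nonincreasing in the distance to the lattice `αℤ`:
for `0 ≤ s ≤ t ≤ |α|/2`, `f(s) ≥ f(t)`. -/
theorem periodized_gaussian_even_periodic_monotone (α σ : ℝ) (hα : α ≠ 0) (hσ : 0 < σ) :
    let f : ℝ → ℝ := fun t => ∑' k : ℤ, Real.exp (-(t + k * α) ^ 2 / (2 * σ ^ 2))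
    (∀ t : ℝ, f (-t) = f t) ∧
    (∀ t : ℝ, f (t + |α|) = f t) ∧
    (∀ s t : ℝ, 0 ≤ s → s ≤ t → t ≤ |α| / 2 → f t ≤ f s) := by
  intro f
  have hc : 0 < 2 * σ ^ 2 := by positivity
  have ha : 0 < |α| := abs_pos.mpr hα
  have hbridge : ∀ t : ℝ,
      f t = ∑' n : ℤ, Real.exp (-(t + (n : ℝ) * |α|) ^ 2 / (2 * σ ^ 2)) := by
    intro t
    show (∑' k : ℤ, Real.exp (-(t + (k : ℝ) * α) ^ 2 / (2 * σ ^ 2))) = _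
    rcases abs_cases α with ⟨h1, _⟩ | ⟨h1, _⟩
    · rw [h1]
    · rw [h1]
      rw [← (Equiv.neg ℤ).tsum_eq
        (fun n : ℤ => Real.exp (-(t + (n : ℝ) * -α) ^ 2 / (2 * σ ^ 2)))]
      congr 1; funext n
      simp only [Equiv.neg_apply]
      congr 1; push_cast; ring
  refine ⟨?_, ?_, ?_⟩
  · intro t
    rw [hbridge t, hbridge (-t)]
    exact PG.F_even t
  · intro t
    rw [hbridge t, hbridge (t + |α|)]
    exact PG.F_per t
  · intro s t hs hst ht
    rw [hbridge t, hbridge s]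
    rcases le_or_gt (|α| ^ 2) (12 * (2 * σ ^ 2)) with hreg | hreg
    · rw [PG.poisson ha hc t, PG.poisson ha hc s]
      exact mul_le_mul_of_nonneg_left (PG.fourier_mono ha hc hreg hs hst ht)
        (Real.sqrt_nonneg _)
    · have h12 : 12 * (2 * σ ^ 2) ≤ |α| ^ 2 := hreg.le
      have h4 : 4 * (2 * σ ^ 2) ≤ |α| ^ 2 := by linarith
      rcases le_total t (|α| / 4) with hcase | hcase
      · exact PG.region1 hc ha h12 hs hst hcase
      · rcases le_total (|α| / 4) s with hcase2 | hcase2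
        · exact PG.region2 hc ha h4 hcase2 hst ht
        · have step1 := PG.region2 hc ha h4 (le_refl (|α| / 4)) hcase ht
          have step2 := PG.region1 hc ha h12 hs hcase2 (le_refl (|α| / 4))
          exact step1.trans step2
end
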